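/- Let k > 0, θ > 0, ρ > 0, λ_I > 0, λ_O > 0, γ̄_O > 0 and γ̄_I > 0 be reals with λ_O > λ_I·γ̄_O, and let H be a real random variable whose law has density f(x) = x^(k−1) · exp(−x/θ) / (Γ(k) θ^k) on (0, ∞). Then the indoor-user outage probability satisfies 1 − P( ρ·λ_O·H²/(ρ·λ_I·H² + 1) > γ̄_O and ρ·λ_I·H² > γ̄_I ) = γ( k, max{ √(γ̄_O/(ρ·(λ_O − λ_I·γ̄_O))), √(γ̄_I/(λ_I·ρ)) } / θ ) / Γ(k). -/

import Mathlib

open Real MeasureTheory intervalIntegral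

/-- The lower incomplete gamma function `γ(k, y) = ∫₀^y s^(k−1) e^(−s) ds`. -/
noncomputable def lowerIncGamma (k y : ℝ) : ℝ :=
  ∫ s in (0 : ℝ)..y, s ^ (k - 1) * Real.exp (-s)

lemma aux_subst {k θ : ℝ} (hθ : 0 < θ) {c : ℝ} (hc : 0 ≤ c) :
    ∫ x in (0:ℝ)..c, x ^ (k-1) * Real.exp (-x/θ)
      = θ ^ k * lowerIncGamma k (c/θ) := by
  have hθ1 : (θ : ℝ) ^ (k-1) ≠ 0 := (Real.rpow_pos_of_pos hθ _).ne'
  have h1 : ∀ x ∈ Set.uIcc (0:ℝ) c,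
      x ^ (k-1) * Real.exp (-x/θ)
        = θ ^ (k-1) * ((x/θ) ^ (k-1) * Real.exp (-(x/θ))) := by
    intro x hx
    rw [Set.uIcc_of_le hc] at hx
    rw [Real.div_rpow hx.1 hθ.le, neg_div]
    field_simp
  rw [intervalIntegral.integral_congr h1, intervalIntegral.integral_const_mul,
    intervalIntegral.integral_comp_div (fun s => s ^ (k-1) * Real.exp (-s)) hθ.ne']
  rw [lowerIncGamma, smul_eq_mul, zero_div, ← mul_assoc,
    Real.rpow_sub_one hθ.ne', div_mul_cancel₀ _ hθ.ne']

lemma aux_iff {ρ lamI lamO γbarO γbarI : ℝ}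
    (hρ : 0 < ρ) (hI : 0 < lamI) (hO : 0 < lamO)
    (hγO : 0 < γbarO) (hγI : 0 < γbarI) (hcond : lamI * γbarO < lamO) (x : ℝ) :
    (ρ * lamO * x ^ 2 / (ρ * lamI * x ^ 2 + 1) > γbarO ∧ ρ * lamI * x ^ 2 > γbarI)
      ↔ max (Real.sqrt (γbarO / (ρ * (lamO - lamI * γbarO))))
          (Real.sqrt (γbarI / (lamI * ρ))) < |x| := by
  have hd : 0 < ρ * lamI * x ^ 2 + 1 := by positivity
  have hA : 0 < ρ * (lamO - lamI * γbarO) := by nlinarith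
  have h1 : ρ * lamO * x ^ 2 / (ρ * lamI * x ^ 2 + 1) > γbarO
      ↔ γbarO / (ρ * (lamO - lamI * γbarO)) < x ^ 2 := by
    rw [gt_iff_lt, lt_div_iff₀ hd, div_lt_iff₀ hA]
    constructor <;> intro <;> nlinarith
  have h2 : ρ * lamI * x ^ 2 > γbarI ↔ γbarI / (lamI * ρ) < x ^ 2 := by
    rw [gt_iff_lt, div_lt_iff₀ (by positivity)]
    constructor <;> intro <;> nlinarith
  have hsq : ∀ a : ℝ, 0 ≤ a → (a < x ^ 2 ↔ Real.sqrt a < |x|) := by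
    intro a ha
    rw [← Real.sqrt_lt_sqrt_iff ha, Real.sqrt_sq_eq_abs]
  rw [h1, h2, hsq _ (by positivity), hsq _ (by positivity), max_lt_iff]

theorem indoor_outage_probability (k θ ρ lamI lamO γbarO γbarI : ℝ)
    (hk : 0 < k) (hθ : 0 < θ) (hρ : 0 < ρ) (hI : 0 < lamI) (hO : 0 < lamO)
    (hγO : 0 < γbarO) (hγI : 0 < γbarI) (hcond : lamI * γbarO < lamO)
    {Ω : Type*} [MeasurableSpace Ω] (P : Measure Ω) [IsProbabilityMeasure P]
    (H : Ω → ℝ) (hH : Measurable H)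
    (hlaw : P.map H = volume.withDensity (fun x =>
      ENNReal.ofReal (if 0 < x then x ^ (k - 1) * Real.exp (-x / θ) / (Real.Gamma k * θ ^ k)
        else 0))) :
    1 - P {ω | ρ * lamO * (H ω) ^ 2 / (ρ * lamI * (H ω) ^ 2 + 1) > γbarO ∧
          ρ * lamI * (H ω) ^ 2 > γbarI} =
      ENNReal.ofReal
        (lowerIncGamma k
            (max (Real.sqrt (γbarO / (ρ * (lamO - lamI * γbarO))))
              (Real.sqrt (γbarI / (lamI * ρ))) / θ) / Real.Gamma k) := by
  set c : ℝ := max (Real.sqrt (γbarO / (ρ * (lamO - lamI * γbarO))))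
      (Real.sqrt (γbarI / (lamI * ρ))) with hc
  have hc0 : 0 ≤ c := le_trans (Real.sqrt_nonneg _) (le_max_left _ _)
  -- the event is `|H ω| > c`
  have hEvent : {ω | ρ * lamO * (H ω) ^ 2 / (ρ * lamI * (H ω) ^ 2 + 1) > γbarO ∧
      ρ * lamI * (H ω) ^ 2 > γbarI} = H ⁻¹' {x : ℝ | c < |x|} := by
    ext ω
    exact aux_iff hρ hI hO hγO hγI hcond (H ω)
  have hSmeas : MeasurableSet {x : ℝ | c < |x|} :=
    measurableSet_lt measurable_const measurable_abs
  rw [hEvent, ← prob_compl_eq_one_sub (hH hSmeas), ← Set.preimage_compl,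
    ← Measure.map_apply hH hSmeas.compl, hlaw]
  have hcompl : {x : ℝ | c < |x|}ᶜ = Set.Icc (-c) c := by
    ext x
    simp [not_lt, abs_le]
  rw [hcompl, withDensity_apply _ measurableSet_Icc]
  -- split off the nonpositive part
  have hsplit : Set.Icc (-c) c = Set.Icc (-c) 0 ∪ Set.Ioc 0 c :=
    (Set.Icc_union_Ioc_eq_Icc (by linarith) hc0).symm
  have hdisj : Disjoint (Set.Icc (-c) (0:ℝ)) (Set.Ioc 0 c) := by
    rw [Set.disjoint_left]
    rintro x ⟨_, hx0⟩ ⟨hx0', _⟩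
    linarith
  rw [hsplit, lintegral_union measurableSet_Ioc hdisj]
  have hzero : ∫⁻ x in Set.Icc (-c) (0:ℝ), ENNReal.ofReal
      (if 0 < x then x ^ (k - 1) * Real.exp (-x / θ) / (Real.Gamma k * θ ^ k) else 0) = 0 := by
    rw [setLIntegral_congr_fun (g := fun _ => 0) measurableSet_Icc]
    · simp
    · exact fun x hx => by rw [if_neg (not_lt.mpr hx.2)]; simp
  rw [hzero, zero_add]
  have hpos : ∫⁻ x in Set.Ioc (0:ℝ) c, ENNReal.ofReal
        (if 0 < x then x ^ (k - 1) * Real.exp (-x / θ) / (Real.Gamma k * θ ^ k) else 0)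
      = ∫⁻ x in Set.Ioc (0:ℝ) c, ENNReal.ofReal
        (x ^ (k - 1) * Real.exp (-x / θ) / (Real.Gamma k * θ ^ k)) :=
    setLIntegral_congr_fun measurableSet_Ioc (fun x hx => by rw [if_pos hx.1])
  rw [hpos]
  -- integrability
  have hint : IntervalIntegrable
      (fun x => x ^ (k - 1) * Real.exp (-x / θ) / (Real.Gamma k * θ ^ k)) volume 0 c := by
    have h1 : IntervalIntegrable (fun x : ℝ => x ^ (k - 1)) volume 0 c :=
      intervalIntegral.intervalIntegrable_rpow' (by linarith)
    have h2 := h1.mul_continuousOn (g := fun x => Real.exp (-x / θ) / (Real.Gamma k * θ ^ k))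
      (Continuous.continuousOn (by fun_prop))
    simpa [mul_div_assoc] using h2
  have hIOn : IntegrableOn
      (fun x => x ^ (k - 1) * Real.exp (-x / θ) / (Real.Gamma k * θ ^ k))
      (Set.Ioc 0 c) volume := by
    rwa [intervalIntegrable_iff_integrableOn_Ioc_of_le hc0] at hint
  have hΓpos : 0 < Real.Gamma k := Real.Gamma_pos_of_pos hk
  have hnn : 0 ≤ᵐ[volume.restrict (Set.Ioc (0:ℝ) c)]
      fun x => x ^ (k - 1) * Real.exp (-x / θ) / (Real.Gamma k * θ ^ k) :=
    (ae_restrict_iff' measurableSet_Ioc).mpr (ae_of_all _ fun x hx =>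
      div_nonneg (mul_nonneg (Real.rpow_nonneg hx.1.le _) (Real.exp_pos _).le)
        (mul_nonneg hΓpos.le (Real.rpow_pos_of_pos hθ _).le))
  rw [← ofReal_integral_eq_lintegral_ofReal hIOn hnn]
  congr 1
  rw [← intervalIntegral.integral_of_le hc0]
  have : ∀ x : ℝ, x ^ (k - 1) * Real.exp (-x / θ) / (Real.Gamma k * θ ^ k)
      = (Real.Gamma k * θ ^ k)⁻¹ * (x ^ (k - 1) * Real.exp (-x / θ)) := by
    intro x; ring
  simp_rw [this]
  rw [intervalIntegral.integral_const_mul, aux_subst hθ hc0]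
  have hΓ : Real.Gamma k ≠ 0 := (Real.Gamma_pos_of_pos hk).ne'
  have hθk : (θ : ℝ) ^ k ≠ 0 := (Real.rpow_pos_of_pos hθ _).ne'
  field_simp
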